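/- Equality of feasible sets for the completely bounded trace norm SDP: Let X, Y, Z be finite-dimensional complex vector spaces, let A ∈ L(X, Y⊗Z), and let W = ℂᵏ with k = max{dim(X), dim(Y⊗Z)}. Define Q = {W ∈ Pos(Y⊗Z) : Tr_Y(W) = Tr_Y(A ρ A*) for some density operator ρ ∈ D(X)} and R = {Tr_W[(U* ⊗ 1_Z)(A ⊗ 1_W) u u* (A* ⊗ 1_W)(U ⊗ 1_Z)] : u a unit vector in X⊗W, U a unitary operator on Y⊗W}. Then Q = R. -/

import Mathlib

open Matrix
open scoped Kronecker ComplexOrder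

noncomputable section

/-- The positive semidefinite square root of a positive semidefinite matrix
(the definition of `Matrix.PosSemidef.sqrt` in the older Mathlib, since removed). -/
def Matrix.PosSemidef.sqrt {n 𝕜 : Type*} [Fintype n] [DecidableEq n] [RCLike 𝕜]
    {A : Matrix n n 𝕜} (hA : A.PosSemidef) : Matrix n n 𝕜 :=
  hA.1.eigenvectorUnitary.1 * diagonal ((↑) ∘ (√·) ∘ hA.1.eigenvalues) *
  (star hA.1.eigenvectorUnitary : Matrix n n 𝕜)

/-- The trace norm `‖A‖₁ = Tr √(A* A)`. -/
def traceNorm {m n : Type*} [Fintype m] [Fintype n] [DecidableEq n]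
    (A : Matrix m n ℂ) : ℝ :=
  (Matrix.posSemidef_conjTranspose_mul_self A).sqrt.trace.re

/-- The spectral norm (operator norm w.r.t. Euclidean norms). -/
def specNorm {m n : Type*} [Fintype m] [Fintype n] [DecidableEq n]
    (A : Matrix m n ℂ) : ℝ :=
  ‖LinearMap.toContinuousLinearMap (Matrix.toEuclideanLin A)‖

/-- The Frobenius norm `‖A‖₂ = √Tr(A*A)`. -/
def frobeniusNorm {m n : Type*} [Fintype m] [Fintype n] (A : Matrix m n ℂ) : ℝ :=
  Real.sqrt ((Aᴴ * A).trace.re)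

/-- Partial trace over the first tensor factor. -/
def ptraceFst {y z : Type*} [Fintype y] (M : Matrix (y × z) (y × z) ℂ) : Matrix z z ℂ :=
  Matrix.of fun a b => ∑ i, M (i, a) (i, b)

/-- Partial trace over the second tensor factor. -/
def ptraceSnd {y z : Type*} [Fintype z] (M : Matrix (y × z) (y × z) ℂ) : Matrix y y ℂ :=
  Matrix.of fun i j => ∑ a, M (i, a) (j, a)

/-- The super-operator `Φ ⊗ 1_{L(W)}`, for `Φ : L(X) → L(Y)` and `W` indexed by `k`. -/
def tensorId {n m : Type*} [Fintype n] [Fintype m] (k : Type*) [Fintype k]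
    (Φ : Matrix n n ℂ →ₗ[ℂ] Matrix m m ℂ) :
    Matrix (n × k) (n × k) ℂ →ₗ[ℂ] Matrix (m × k) (m × k) ℂ where
  toFun M := Matrix.of fun p q => Φ (Matrix.of fun i j => M (i, p.2) (j, q.2)) p.1 q.1
  map_add' M N := by
    ext p q
    show Φ (Matrix.of fun i j => (M + N) (i, p.2) (j, q.2)) p.1 q.1 =
      Φ (Matrix.of fun i j => M (i, p.2) (j, q.2)) p.1 q.1 +
        Φ (Matrix.of fun i j => N (i, p.2) (j, q.2)) p.1 q.1
    have h : (Matrix.of fun i j => (M + N) (i, p.2) (j, q.2)) =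
        (Matrix.of fun i j => M (i, p.2) (j, q.2)) +
          (Matrix.of fun i j => N (i, p.2) (j, q.2)) := rfl
    rw [h, map_add]; rfl
  map_smul' c M := by
    ext p q
    show Φ (Matrix.of fun i j => (c • M) (i, p.2) (j, q.2)) p.1 q.1 =
      (c • Φ (Matrix.of fun i j => M (i, p.2) (j, q.2))) p.1 q.1
    have h : (Matrix.of fun i j => (c • M) (i, p.2) (j, q.2)) =
        c • (Matrix.of fun i j => M (i, p.2) (j, q.2)) := rfl
    rw [h, _root_.map_smul]

/-- The trace norm induced on super-operators. -/
def inducedTraceNorm {a b : Type*} [Fintype a] [DecidableEq a] [Fintype b] [DecidableEq b]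
    (Φ : Matrix a a ℂ →ₗ[ℂ] Matrix b b ℂ) : ℝ :=
  sSup {x : ℝ | ∃ X : Matrix a a ℂ, traceNorm X ≤ 1 ∧ x = traceNorm (Φ X)}

/-- The completely bounded trace norm (diamond norm):
`sup over k ≥ 1 of ‖Φ ⊗ 1_{L(ℂᵏ)}‖₁`. -/
def diamondNorm {n m : Type*} [Fintype n] [DecidableEq n] [Fintype m] [DecidableEq m]
    (Φ : Matrix n n ℂ →ₗ[ℂ] Matrix m m ℂ) : ℝ :=
  ⨆ k : ℕ, inducedTraceNorm (tensorId (Fin (k + 1)) Φ)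


/-- Choi–Jamiołkowski representation `J(Φ) = Σ_{i,j} Φ(E_{i,j}) ⊗ E_{i,j}`. -/
def choi {n m : Type*} [Fintype n] [DecidableEq n] [Fintype m]
    (Φ : Matrix n n ℂ →ₗ[ℂ] Matrix m m ℂ) : Matrix (m × n) (m × n) ℂ :=
  ∑ i : n, ∑ j : n, (Φ (Matrix.single i j 1)) ⊗ₖ (Matrix.single i j 1)

/-- A quantum channel: a completely positive and trace-preserving super-operator. -/
def IsQuantumChannel {n m : Type*} [Fintype n] [Fintype m]
    (Φ : Matrix n n ℂ →ₗ[ℂ] Matrix m m ℂ) : Prop :=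
  (∀ (k : ℕ) (P : Matrix (n × Fin k) (n × Fin k) ℂ), P.PosSemidef →
      (tensorId (Fin k) Φ P).PosSemidef) ∧
    ∀ X : Matrix n n ℂ, (Φ X).trace = X.trace

open Classical in
/-- Square root of a positive semidefinite matrix (junk value `0` otherwise). -/
def matSqrt {r : Type*} [Fintype r] [DecidableEq r] (P : Matrix r r ℂ) : Matrix r r ℂ :=
  if h : P.PosSemidef then h.sqrt else 0

/-- The fidelity `F(P,Q) = ‖√P √Q‖₁`. -/
def fidelity {r : Type*} [Fintype r] [DecidableEq r] (P Q : Matrix r r ℂ) : ℝ :=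
  traceNorm (matSqrt P * matSqrt Q)

/-- `U ⊗ 1_Z` regarded as an operator on `(Y ⊗ Z) ⊗ W`, for `U` an operator
on `Y ⊗ W` (the tensor factors being appropriately identified). -/
def unitaryTensorIdZ {m r k : Type*} [DecidableEq r]
    (U : Matrix (m × k) (m × k) ℂ) :
    Matrix ((m × r) × k) ((m × r) × k) ℂ :=
  Matrix.of fun p q => (if p.1.2 = q.1.2 then U (p.1.1, p.2) (q.1.1, q.2) else 0)


-- ===== auxiliary lemmas =====
section CBAux
open scoped InnerProductSpace

private lemma psd_sqrt_conjTranspose {n : Type*} [Fintype n] [DecidableEq n]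
    {A : Matrix n n ℂ} (hA : A.PosSemidef) : (hA.sqrt)ᴴ = hA.sqrt := by
  have hd : star ((RCLike.ofReal ∘ (√·) ∘ hA.1.eigenvalues) : n → ℂ) =
      (RCLike.ofReal ∘ (√·) ∘ hA.1.eigenvalues : n → ℂ) := by
    funext i; simp
  simp only [Matrix.PosSemidef.sqrt, Matrix.conjTranspose_mul, Matrix.star_eq_conjTranspose,
    Matrix.conjTranspose_conjTranspose, Matrix.diagonal_conjTranspose, hd, Matrix.mul_assoc]

private lemma psd_sqrt_mul_self {n : Type*} [Fintype n] [DecidableEq n]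
    {A : Matrix n n ℂ} (hA : A.PosSemidef) : hA.sqrt * hA.sqrt = A := by
  set U := hA.1.eigenvectorUnitary with hUdef
  have hU : (star U : Matrix n n ℂ) * (U : Matrix n n ℂ) = 1 := by simp
  conv_rhs => rw [hA.1.spectral_theorem, Unitary.conjStarAlgAut_apply]
  simp only [Matrix.PosSemidef.sqrt]
  rw [← hUdef]
  calc _ = (U : Matrix n n ℂ) * (diagonal (RCLike.ofReal ∘ (√·) ∘ hA.1.eigenvalues : n → ℂ) *
        ((star U : Matrix n n ℂ) * (U : Matrix n n ℂ)) *
        diagonal (RCLike.ofReal ∘ (√·) ∘ hA.1.eigenvalues : n → ℂ)) * (star U : Matrix n n ℂ) := by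
          simp only [Matrix.mul_assoc]
    _ = _ := by
          rw [hU, Matrix.mul_one, Matrix.diagonal_mul_diagonal]
          congr 3
          funext i
          simp only [Function.comp_apply]
          rw [← RCLike.ofReal_mul, Real.mul_self_sqrt (hA.eigenvalues_nonneg i)]

private lemma esum_apply {e : Type*} [Fintype e] {ι : Type*} (s : Finset ι)
    (f : ι → EuclideanSpace ℂ e) (a : e) : (∑ i ∈ s, f i) a = ∑ i ∈ s, f i a := by
  rw [WithLp.ofLp_sum, Finset.sum_apply]

private def mvE {z e : Type*} [Fintype z] [Fintype e] (M : Matrix e z ℂ) :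
    EuclideanSpace ℂ z →ₗ[ℂ] EuclideanSpace ℂ e where
  toFun x := WithLp.toLp 2 (M.mulVec x)
  map_add' x y := by simp [Matrix.mulVec_add]
  map_smul' c x := by simp [Matrix.mulVec_smul]

lemma inner_mvE {z e : Type*} [Fintype z] [Fintype e] (M : Matrix e z ℂ)
    (x y : EuclideanSpace ℂ z) :
    ⟪mvE M x, mvE M y⟫_ℂ = star x ⬝ᵥ ((Mᴴ * M) *ᵥ y) := by
  rw [← Matrix.mulVec_mulVec, Matrix.dotProduct_mulVec (star x) Mᴴ, ← Matrix.star_mulVec]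
  simp [PiLp.inner_apply, RCLike.inner_apply, dotProduct, mvE]
  exact Finset.sum_congr rfl fun _ _ => mul_comm _ _

lemma exists_unitary_left {z e : Type*} [Fintype z] [Fintype e] [DecidableEq e]
    (M N : Matrix e z ℂ) (h : Mᴴ * M = Nᴴ * N) :
    ∃ U : Matrix e e ℂ, Uᴴ * U = 1 ∧ M = U * N := by
  classical
  set f := mvE M with hf
  set g := mvE N with hg
  have hinner : ∀ x y, ⟪f x, f y⟫_ℂ = ⟪g x, g y⟫_ℂ := by
    intro x y; rw [hf, hg, inner_mvE, inner_mvE, h]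
  have hnorm : ∀ x, ‖f x‖ = ‖g x‖ := by
    intro x
    rw [@norm_eq_sqrt_re_inner ℂ, @norm_eq_sqrt_re_inner ℂ, hinner]
  have hker : LinearMap.ker g ≤ LinearMap.ker f := by
    intro x hx
    rw [LinearMap.mem_ker] at hx ⊢
    have := hnorm x
    rw [hx, norm_zero, norm_eq_zero] at this
    exact this
  set L0 := (LinearMap.ker g).liftQ f hker with hL0
  set eL := g.quotKerEquivRange with heL
  set L := L0.comp (eL.symm.toLinearMap) with hL
  have hLg : ∀ x, L ⟨g x, LinearMap.mem_range_self g x⟩ = f x := by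
    intro x
    have h1 : (⟨g x, LinearMap.mem_range_self g x⟩ : LinearMap.range g)
        = eL (Submodule.Quotient.mk x) := by
      rw [heL]; exact Subtype.ext (LinearMap.quotKerEquivRange_apply_mk g x).symm
    rw [hL, LinearMap.comp_apply, h1]
    simp [hL0, Submodule.liftQ_apply]
  have hLi : ∀ s : LinearMap.range g, ‖L s‖ = ‖s‖ := by
    rintro ⟨-, x, rfl⟩
    rw [hLg x]
    exact hnorm x
  set Li : (LinearMap.range g) →ₗᵢ[ℂ] EuclideanSpace ℂ e := ⟨L, hLi⟩ with hLidef
  set Lext := Li.extend with hLext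
  set U : Matrix e e ℂ := Matrix.of fun a b => (Lext (EuclideanSpace.single b 1)) a with hU
  have hkey : ∀ x : EuclideanSpace ℂ e, U *ᵥ x = Lext x := by
    intro x
    have hx : x = ∑ b, x b • EuclideanSpace.single b (1:ℂ) := by
      have h2 := (EuclideanSpace.basisFun e ℂ).sum_repr x
      simp only [EuclideanSpace.basisFun_apply, EuclideanSpace.basisFun_repr] at h2
      exact h2.symm
    conv_rhs => rw [hx, map_sum]
    funext a
    rw [esum_apply]
    simp only [_root_.map_smul, PiLp.smul_apply, smul_eq_mul]
    simp only [Matrix.mulVec, dotProduct, hU, Matrix.of_apply]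
    exact Finset.sum_congr rfl fun b _ => mul_comm _ _
  have hcol : ∀ b, (fun a => U a b) = Lext (EuclideanSpace.single b 1) := by
    intro b; rfl
  refine ⟨U, ?_, ?_⟩
  · ext a b
    calc (Uᴴ * U) a b
        = ∑ c, (starRingEnd ℂ) (Lext (EuclideanSpace.single a 1) c)
            * Lext (EuclideanSpace.single b 1) c := by
          simp [Matrix.mul_apply, Matrix.conjTranspose_apply, hU]
      _ = ⟪Lext (EuclideanSpace.single a 1), Lext (EuclideanSpace.single b 1)⟫_ℂ := by
          rw [PiLp.inner_apply]; simp [RCLike.inner_apply]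
          exact Finset.sum_congr rfl fun _ _ => mul_comm _ _
      _ = ⟪(EuclideanSpace.single a (1:ℂ)), EuclideanSpace.single b 1⟫_ℂ :=
          LinearIsometry.inner_map_map _ _ _
      _ = (1 : Matrix e e ℂ) a b := by
          rw [EuclideanSpace.inner_single_left]
          simp [EuclideanSpace.single_apply, Matrix.one_apply, eq_comm]
  · have hx : ∀ x : EuclideanSpace ℂ z, M *ᵥ x = U *ᵥ (N *ᵥ x) := by
      intro x
      have h2 : (U *ᵥ (N *ᵥ x)) = Lext ((⟨g x, LinearMap.mem_range_self g x⟩ :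
          LinearMap.range g) : EuclideanSpace ℂ e) := hkey (g x)
      rw [h2, hLext, LinearIsometry.extend_apply]
      exact congrArg WithLp.ofLp (hLg x).symm
    ext i j
    have := congrFun (hx (EuclideanSpace.single j 1)) i
    simpa [Matrix.mul_apply, Matrix.mulVec, dotProduct, Pi.single_apply,
      mul_ite, ite_mul, mul_zero, zero_mul, mul_one, Finset.sum_ite_eq, Finset.sum_ite_eq'] using this

-- reshape
private def rsh {m r k : Type*} (x : (m × r) × k → ℂ) : Matrix (m × k) r ℂ :=
  Matrix.of fun p z => x ((p.1, z), p.2)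

private lemma rsh_inj {m r k : Type*} {x y : (m × r) × k → ℂ} (h : rsh x = rsh y) : x = y := by
  funext p
  have := congrFun (congrFun h (p.1.1, p.2)) p.1.2
  simpa [rsh] using this

private lemma utiz_conjTranspose {m r k : Type*} [DecidableEq r]
    (U : Matrix (m × k) (m × k) ℂ) :
    (unitaryTensorIdZ (r := r) U)ᴴ = unitaryTensorIdZ (r := r) Uᴴ := by
  ext p q
  simp [unitaryTensorIdZ, Matrix.conjTranspose_apply, eq_comm]
  split <;> simp

private lemma rsh_mulVec {m r k : Type*} [Fintype m] [Fintype r] [Fintype k] [DecidableEq r]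
    (V : Matrix (m × k) (m × k) ℂ) (x : (m × r) × k → ℂ) :
    rsh (unitaryTensorIdZ (r := r) V *ᵥ x) = V * rsh x := by
  ext p z
  simp [rsh, Matrix.mulVec, dotProduct, unitaryTensorIdZ, Matrix.mul_apply,
    Fintype.sum_prod_type, ite_mul, zero_mul]

-- Gram matrix from a bipartite vector
private def gram {p k : Type*} [Fintype k] (x : p × k → ℂ) : Matrix p p ℂ :=
  Matrix.of fun a b => ∑ j, x (a, j) * (starRingEnd ℂ) (x (b, j))

private lemma ptraceSnd_vecMulVec {y k : Type*} [Fintype k] (x : y × k → ℂ) :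
    ptraceSnd (vecMulVec x (star x)) = gram x := by
  ext a b
  simp [ptraceSnd, vecMulVec, _root_.gram]

private lemma gram_posSemidef {p k : Type*} [Fintype p] [Fintype k] (x : p × k → ℂ) :
    (gram x).PosSemidef := by
  have h : gram x = (Matrix.of fun a (j : k) => x (a, j)) *
      (Matrix.of fun a (j : k) => x (a, j))ᴴ := by
    ext a b
    simp [_root_.gram, Matrix.mul_apply, Matrix.conjTranspose_apply]
  rw [h]
  exact Matrix.posSemidef_self_mul_conjTranspose _

private lemma trace_gram {p k : Type*} [Fintype p] [Fintype k] (x : p × k → ℂ) :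
    (gram x).trace = star x ⬝ᵥ x := by
  simp [_root_.gram, Matrix.trace, Matrix.diag, dotProduct, Fintype.sum_prod_type, mul_comm]

private lemma conj_sandwich {a b : Type*} [Fintype a] [Fintype b]
    (C : Matrix a b ℂ) (x : a → ℂ) :
    Cᴴ * vecMulVec x (star x) * C = vecMulVec (Cᴴ *ᵥ x) (star (Cᴴ *ᵥ x)) := by
  ext i j
  simp only [Matrix.mul_apply, vecMulVec_apply, Matrix.conjTranspose_apply, Matrix.mulVec,
    dotProduct, Pi.star_apply, RCLike.star_def, map_sum, _root_.map_mul,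
    RingHomCompTriple.comp_apply, Complex.conj_conj, RingHom.id_apply, Finset.sum_mul, Finset.mul_sum]
  refine Finset.sum_congr rfl fun c _ => Finset.sum_congr rfl fun d _ => by ring

private lemma rsh_gram {m r k : Type*} [Fintype m] [Fintype r] [Fintype k]
    (x : (m × r) × k → ℂ) :
    (rsh x)ᴴ * rsh x = (ptraceFst (gram x))ᵀ := by
  ext z z'
  simp [rsh, Matrix.mul_apply, Matrix.conjTranspose_apply, ptraceFst, _root_.gram,
    Fintype.sum_prod_type, Matrix.transpose_apply, mul_comm]

private lemma gram_kron {p n k : Type*} [Fintype p] [Fintype n] [Fintype k] [DecidableEq k]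
    (A : Matrix p n ℂ) (u : n × k → ℂ) :
    gram ((A ⊗ₖ (1 : Matrix k k ℂ)) *ᵥ u) = A * gram u * Aᴴ := by
  have hv : ∀ q : p × k, ((A ⊗ₖ (1 : Matrix k k ℂ)) *ᵥ u) q = ∑ i, A q.1 i * u (i, q.2) := by
    intro q
    simp [Matrix.mulVec, dotProduct, Fintype.sum_prod_type, Matrix.one_apply,
      mul_ite, ite_mul, zero_mul, mul_zero, Finset.sum_ite_eq, Finset.sum_ite_eq']
  ext a b
  simp only [_root_.gram, Matrix.of_apply, hv, Matrix.mul_apply, Matrix.conjTranspose_apply,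
    map_sum, _root_.map_mul, RCLike.star_def, Finset.sum_mul, Finset.mul_sum]
  rw [Finset.sum_comm]
  refine Finset.sum_congr rfl fun i _ => ?_
  rw [Finset.sum_comm]
  refine Finset.sum_congr rfl fun i' _ => Finset.sum_congr rfl fun j _ => by ring

private lemma sum_dite_lt {k n : ℕ} (hkn : n ≤ k) (f : Fin n → ℂ) :
    ∑ j : Fin k, (if h : (j : ℕ) < n then f ⟨j, h⟩ else 0) = ∑ j : Fin n, f j := by
  set g : ℕ → ℂ := fun j => if h : j < n then f ⟨j, h⟩ else 0 with hg
  have e1 : ∑ j : Fin k, (if h : (j : ℕ) < n then f ⟨j, h⟩ else 0)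
      = ∑ j ∈ Finset.range k, g j := Fin.sum_univ_eq_sum_range g k
  have e2 : ∑ j : Fin n, f j = ∑ j ∈ Finset.range n, g j := by
    rw [← Fin.sum_univ_eq_sum_range]
    exact Finset.sum_congr rfl fun j _ => by simp [hg]
  rw [e1, e2]
  exact (Finset.sum_subset (Finset.range_subset_range.2 hkn)
    fun x _ hx => dif_neg (by simpa using hx)).symm


private lemma ptraceFst_gram_conj {m r k : Type*} [Fintype m] [Fintype r] [Fintype k]
    [DecidableEq m] [DecidableEq r] [DecidableEq k]
    (U : Matrix (m × k) (m × k) ℂ) (hUU : Uᴴ * U = 1) (x : (m × r) × k → ℂ) :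
    ptraceFst (gram ((unitaryTensorIdZ (r := r) U)ᴴ *ᵥ x)) = ptraceFst (gram x) := by
  have hUUT : U * Uᴴ = 1 := mul_eq_one_comm.mp hUU
  have e1 : rsh ((unitaryTensorIdZ (r := r) U)ᴴ *ᵥ x) = Uᴴ * rsh x := by
    rw [utiz_conjTranspose, rsh_mulVec]
  refine Matrix.transpose_inj.mp ?_
  rw [← rsh_gram, ← rsh_gram, e1, Matrix.conjTranspose_mul, Matrix.conjTranspose_conjTranspose,
    Matrix.mul_assoc, ← Matrix.mul_assoc U Uᴴ (rsh x), hUUT, Matrix.one_mul]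

end CBAux

/-- Equality of the feasible sets for the completely bounded trace norm SDP,
with `W = ℂᵏ` for `k = max (dim X) (dim (Y ⊗ Z))`. -/
theorem cb_trace_norm_feasible_sets_eq {n m r : ℕ}
    (A : Matrix (Fin m × Fin r) (Fin n) ℂ) :
    {W : Matrix (Fin m × Fin r) (Fin m × Fin r) ℂ | W.PosSemidef ∧
        ∃ ρ : Matrix (Fin n) (Fin n) ℂ, ρ.PosSemidef ∧ ρ.trace = 1 ∧
          ptraceFst W = ptraceFst (A * ρ * Aᴴ)} =
    {W : Matrix (Fin m × Fin r) (Fin m × Fin r) ℂ |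
        ∃ (u : Fin n × Fin (max n (m * r)) → ℂ)
          (U : Matrix (Fin m × Fin (max n (m * r))) (Fin m × Fin (max n (m * r))) ℂ),
          star u ⬝ᵥ u = 1 ∧ Uᴴ * U = 1 ∧
          W = ptraceSnd ((unitaryTensorIdZ (r := Fin r) U)ᴴ *
            ((A ⊗ₖ (1 : Matrix (Fin (max n (m * r))) (Fin (max n (m * r))) ℂ)) *
              vecMulVec u (star u) *
              (A ⊗ₖ (1 : Matrix (Fin (max n (m * r))) (Fin (max n (m * r))) ℂ))ᴴ) *
            unitaryTensorIdZ (r := Fin r) U)} := by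
  classical
  ext W
  simp only [Set.mem_setOf_eq]
  constructor
  · rintro ⟨hW, ρ, hρ, hρtr, hpt⟩
    set S := hρ.sqrt with hSdef
    have hSH : Sᴴ = S := psd_sqrt_conjTranspose hρ
    have hSS : S * S = ρ := psd_sqrt_mul_self hρ
    set T := hW.sqrt with hTdef
    have hTH : Tᴴ = T := psd_sqrt_conjTranspose hW
    have hTT : T * T = W := psd_sqrt_mul_self hW
    set u : Fin n × Fin (max n (m * r)) → ℂ :=
      fun q => if h : (q.2 : ℕ) < n then S q.1 ⟨q.2, h⟩ else 0 with hudef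
    set w0 : (Fin m × Fin r) × Fin (max n (m * r)) → ℂ :=
      fun q => if h : (q.2 : ℕ) < m * r then T q.1 (finProdFinEquiv.symm ⟨q.2, h⟩) else 0
      with hw0def
    have hcS : ∀ (b : Fin n) (j' : Fin n), (starRingEnd ℂ) (S b j') = S j' b := by
      intro b j'
      conv_rhs => rw [← hSH]
      simp [Matrix.conjTranspose_apply]
    have hcT : ∀ (b : Fin m × Fin r) (q : Fin m × Fin r), (starRingEnd ℂ) (T b q) = T q b := by
      intro b q
      conv_rhs => rw [← hTH]
      simp [Matrix.conjTranspose_apply]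
    have hgu : gram u = ρ := by
      ext a b
      have e0 : gram u a b = ∑ j : Fin (max n (m * r)),
          (if h : (j : ℕ) < n then S a ⟨j, h⟩ * (starRingEnd ℂ) (S b ⟨j, h⟩) else 0) := by
        simp only [_root_.gram, Matrix.of_apply]
        refine Finset.sum_congr rfl fun j _ => ?_
        by_cases h : (j : ℕ) < n
        · simp only [hudef]; simp only [dif_pos h]
        · simp only [hudef]; simp only [dif_neg h]; simp
      rw [e0, sum_dite_lt (le_max_left n (m * r))
        (fun j' => S a j' * (starRingEnd ℂ) (S b j')), ← hSS, Matrix.mul_apply]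
      exact Finset.sum_congr rfl fun j' _ => by rw [hcS]
    have hgw : gram w0 = W := by
      ext a b
      have e0 : gram w0 a b = ∑ j : Fin (max n (m * r)),
          (if h : (j : ℕ) < m * r then
            T a (finProdFinEquiv.symm ⟨j, h⟩) *
              (starRingEnd ℂ) (T b (finProdFinEquiv.symm ⟨j, h⟩)) else 0) := by
        simp only [_root_.gram, Matrix.of_apply]
        refine Finset.sum_congr rfl fun j _ => ?_
        by_cases h : (j : ℕ) < m * r
        · simp only [hw0def]; simp only [dif_pos h]
        · simp only [hw0def]; simp only [dif_neg h]; simp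
      rw [e0, sum_dite_lt (le_max_right n (m * r))
        (fun j' => T a (finProdFinEquiv.symm j') *
          (starRingEnd ℂ) (T b (finProdFinEquiv.symm j'))), ← hTT, Matrix.mul_apply]
      rw [Equiv.sum_comp finProdFinEquiv.symm
        (fun q => T a q * (starRingEnd ℂ) (T b q))]
      exact Finset.sum_congr rfl fun q _ => by rw [hcT]
    have hutr : star u ⬝ᵥ u = 1 := by
      rw [← trace_gram, hgu, hρtr]
    obtain ⟨U, hUU, hMN⟩ := exists_unitary_left
      (rsh ((A ⊗ₖ (1 : Matrix (Fin (max n (m * r))) (Fin (max n (m * r))) ℂ)) *ᵥ u)) (rsh w0)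
      (by rw [rsh_gram, rsh_gram, gram_kron, hgu, ← hpt, hgw])
    refine ⟨u, U, hutr, hUU, ?_⟩
    have hBu : (A ⊗ₖ (1 : Matrix (Fin (max n (m * r))) (Fin (max n (m * r))) ℂ)) *
        vecMulVec u (star u) *
        (A ⊗ₖ (1 : Matrix (Fin (max n (m * r))) (Fin (max n (m * r))) ℂ))ᴴ =
        vecMulVec ((A ⊗ₖ (1 : Matrix (Fin (max n (m * r))) (Fin (max n (m * r))) ℂ)) *ᵥ u)
          (star ((A ⊗ₖ (1 : Matrix (Fin (max n (m * r))) (Fin (max n (m * r))) ℂ)) *ᵥ u)) := by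
      have h := conj_sandwich
        (A ⊗ₖ (1 : Matrix (Fin (max n (m * r))) (Fin (max n (m * r))) ℂ))ᴴ u
      rwa [Matrix.conjTranspose_conjTranspose] at h
    have hw0v : (unitaryTensorIdZ (r := Fin r) U)ᴴ *ᵥ
        ((A ⊗ₖ (1 : Matrix (Fin (max n (m * r))) (Fin (max n (m * r))) ℂ)) *ᵥ u) = w0 := by
      apply rsh_inj
      rw [utiz_conjTranspose, rsh_mulVec, hMN, ← Matrix.mul_assoc, hUU, Matrix.one_mul]
    rw [hBu, conj_sandwich, hw0v, ptraceSnd_vecMulVec, hgw]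
  · rintro ⟨u, U, hu, hUU, hWeq⟩
    have hBu : (A ⊗ₖ (1 : Matrix (Fin (max n (m * r))) (Fin (max n (m * r))) ℂ)) *
        vecMulVec u (star u) *
        (A ⊗ₖ (1 : Matrix (Fin (max n (m * r))) (Fin (max n (m * r))) ℂ))ᴴ =
        vecMulVec ((A ⊗ₖ (1 : Matrix (Fin (max n (m * r))) (Fin (max n (m * r))) ℂ)) *ᵥ u)
          (star ((A ⊗ₖ (1 : Matrix (Fin (max n (m * r))) (Fin (max n (m * r))) ℂ)) *ᵥ u)) := by
      have h := conj_sandwich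
        (A ⊗ₖ (1 : Matrix (Fin (max n (m * r))) (Fin (max n (m * r))) ℂ))ᴴ u
      rwa [Matrix.conjTranspose_conjTranspose] at h
    rw [hBu, conj_sandwich, ptraceSnd_vecMulVec] at hWeq
    refine ⟨by rw [hWeq]; exact gram_posSemidef _, gram u, gram_posSemidef u,
      by rw [trace_gram]; exact hu, ?_⟩
    rw [hWeq, ptraceFst_gram_conj U hUU, gram_kron]


end
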